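/- The space [P_n(ℝ²)]² of vector-valued polynomials of degree at most n in two variables decomposes as a direct sum [P_n]² = ∇(P_{n+1}) ⊕ x^⊥·P_{n-1}, where x^⊥ = (x₂, -x₁). -/

import Mathlib

open MvPolynomial

noncomputable section

abbrev Poly2 := MvPolynomial (Fin 2) ℝ

/-- `p ∈ P_m(ℝ²)` (total degree at most `m`, with `P_m = {0}` for `m < 0`). -/
def degLE (m : ℤ) (p : Poly2) : Prop := p = 0 ∨ (p.totalDegree : ℤ) ≤ m

/-- Two-dimensional gradient of a scalar polynomial. -/
def pgrad2 (q : Poly2) : Fin 2 → Poly2 := fun i => pderiv i q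

/-- The vector field `x^⊥ · q = (x₂ q, -x₁ q)` for a scalar polynomial `q`. -/
def xperp (q : Poly2) : Fin 2 → Poly2 := ![X 1 * q, -(X 0 * q)]

/-- The Euler operator `x · ∇`. -/
def eulerOp (q : Poly2) : Poly2 := X 0 * pderiv 0 q + X 1 * pderiv 1 q

lemma X_mul_pderiv_monomial (i : Fin 2) (d : Fin 2 →₀ ℕ) (c : ℝ) :
    X i * pderiv i (monomial d c) = monomial d ((d i : ℝ) * c) := by
  rw [pderiv_monomial]
  rcases Nat.eq_zero_or_pos (d i) with h | h
  · simp [h]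
  · have hle : Finsupp.single i 1 ≤ d := by
      rw [Finsupp.single_le_iff]; exact h
    rw [X, monomial_mul, add_tsub_cancel_of_le hle]
    ring_nf

lemma eulerOp_monomial (d : Fin 2 →₀ ℕ) (c : ℝ) :
    eulerOp (monomial d c) = monomial d (((d 0 + d 1 : ℕ) : ℝ) * c) := by
  rw [eulerOp, X_mul_pderiv_monomial, X_mul_pderiv_monomial, ← map_add]
  push_cast
  ring_nf

lemma eulerOp_sum {α : Type*} (s : Finset α) (f : α → Poly2) :
    eulerOp (∑ a ∈ s, f a) = ∑ a ∈ s, eulerOp (f a) := by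
  simp [eulerOp, map_sum, Finset.mul_sum, Finset.sum_add_distrib]

lemma eulerOp_eq (q : Poly2) :
    eulerOp q = ∑ d ∈ q.support, monomial d (((d 0 + d 1 : ℕ) : ℝ) * coeff d q) := by
  conv_lhs => rw [q.as_sum]
  rw [eulerOp_sum]
  exact Finset.sum_congr rfl fun d _ => eulerOp_monomial d _

lemma coeff_eulerOp (q : Poly2) (d : Fin 2 →₀ ℕ) :
    coeff d (eulerOp q) = ((d 0 + d 1 : ℕ) : ℝ) * coeff d q := by
  rw [eulerOp_eq, coeff_sum]
  simp only [coeff_monomial]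
  rw [Finset.sum_ite_eq' q.support d (fun e => ((e 0 + e 1 : ℕ) : ℝ) * coeff e q)]
  by_cases h : d ∈ q.support
  · simp [h]
  · simp [h, (MvPolynomial.notMem_support_iff).mp h]

lemma finsupp_ne_zero {d : Fin 2 →₀ ℕ} (h : d ≠ 0) : d 0 + d 1 ≠ 0 := by
  intro hc
  apply h
  ext i
  fin_cases i <;> simp <;> omega

lemma eulerOp_ker {q : Poly2} (h : eulerOp q = 0) (i : Fin 2) : pderiv i q = 0 := by
  have hq : q = C (coeff 0 q) := by
    ext d
    rcases eq_or_ne d 0 with rfl | hd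
    · simp [coeff_C]
    · have := coeff_eulerOp q d
      rw [h, coeff_zero] at this
      have hne : ((d 0 + d 1 : ℕ) : ℝ) ≠ 0 := by
        exact_mod_cast finsupp_ne_zero hd
      have : coeff d q = 0 := by
        rcases mul_eq_zero.mp this.symm with h' | h'
        · exact absurd h' hne
        · exact h'
      rw [this, coeff_C, if_neg (by simpa using (Ne.symm hd))]
  rw [hq, pderiv_C]

/-- Inverse of the Euler operator on polynomials with zero constant term. -/
def einvP (p : Poly2) : Poly2 :=
  ∑ d ∈ p.support, monomial d (coeff d p / ((d 0 + d 1 : ℕ) : ℝ))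

lemma eulerOp_einvP {p : Poly2} (h : constantCoeff p = 0) : eulerOp (einvP p) = p := by
  rw [einvP, eulerOp_sum]
  conv_rhs => rw [p.as_sum]
  refine Finset.sum_congr rfl fun d hd => ?_
  rw [eulerOp_monomial]
  congr 1
  have hd0 : d ≠ 0 := by
    rintro rfl
    rw [mem_support_iff] at hd
    exact hd h
  have hne : ((d 0 + d 1 : ℕ) : ℝ) ≠ 0 := by exact_mod_cast finsupp_ne_zero hd0
  exact mul_div_cancel₀ _ hne

lemma totalDegree_einvP (p : Poly2) : (einvP p).totalDegree ≤ p.totalDegree := by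
  refine (totalDegree_finset_sum _ _).trans (Finset.sup_le fun d hd => ?_)
  exact (totalDegree_monomial_le _ _).trans (le_totalDegree hd)

lemma prime_X0 : Prime (X 0 : Poly2) := by
  rw [← MulEquiv.prime_iff (finSuccEquiv ℝ 1)]
  show Prime ((finSuccEquiv ℝ 1) (X 0))
  rw [finSuccEquiv_X_zero]
  exact Polynomial.prime_X

lemma not_X0_dvd_X1 : ¬ (X 0 : Poly2) ∣ X 1 := by
  rintro ⟨c, hc⟩
  have := congrArg (eval fun i : Fin 2 => if i = 0 then (0 : ℝ) else 1) hc
  simp at this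

lemma exists_xperp_of_sum_eq_zero {w0 w1 : Poly2} (h : X 0 * w0 + X 1 * w1 = 0) :
    ∃ r : Poly2, w0 = X 1 * r ∧ w1 = -(X 0 * r) := by
  have hdvd : (X 0 : Poly2) ∣ X 1 * w1 := ⟨-w0, by linear_combination h⟩
  rcases prime_X0.2.2 _ _ hdvd with h1 | h1
  · exact absurd h1 not_X0_dvd_X1
  obtain ⟨s, rfl⟩ := h1
  refine ⟨-s, ?_, by ring⟩
  have : X 0 * (w0 + X 1 * s) = 0 := by linear_combination h
  rcases mul_eq_zero.mp this with h' | h'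
  · exact absurd h' (MvPolynomial.X_ne_zero 0)
  · linear_combination h'

lemma totalDegree_pderiv_le (i : Fin 2) (q : Poly2) (n : ℕ) (h : q.totalDegree ≤ n + 1) :
    (pderiv i q).totalDegree ≤ n := by
  conv_lhs => rw [q.as_sum, map_sum]
  refine (totalDegree_finset_sum _ _).trans (Finset.sup_le fun d hd => ?_)
  rw [pderiv_monomial]
  rcases Nat.eq_zero_or_pos (d i) with h0 | h0
  · simp [h0]
  · refine (totalDegree_monomial_le _ _).trans ?_
    simp only [Function.id_def]
    have hle : Finsupp.single i 1 ≤ d := by rw [Finsupp.single_le_iff]; exact h0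
    have hsum : (d.sum fun _ e => e) ≤ n + 1 := (le_totalDegree hd).trans h
    have hdec : d = Finsupp.single i 1 + (d - Finsupp.single i 1) :=
      (add_tsub_cancel_of_le hle).symm
    have : (d.sum fun _ e => e) =
        1 + ((d - Finsupp.single i 1).sum fun _ e => e) := by
      conv_lhs => rw [hdec]
      rw [Finsupp.sum_add_index' (fun _ => rfl) (fun _ _ _ => rfl),
        Finsupp.sum_single_index rfl]
    omega

lemma le_totalDegree_X_mul {r : Poly2} (hr : r ≠ 0) (j : Fin 2) :
    r.totalDegree + 1 ≤ (X j * r).totalDegree := by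
  obtain ⟨d, hd, hdeg⟩ := Finset.exists_mem_eq_sup r.support
    (support_nonempty.mpr hr) (fun s => s.sum fun _ e => e)
  have hmem : Finsupp.single j 1 + d ∈ (X j * r).support := by
    rw [support_X_mul]
    exact Finset.mem_map_of_mem _ hd
  have := le_totalDegree hmem
  rw [Finsupp.sum_add_index' (fun _ => rfl) (fun _ _ _ => rfl),
    Finsupp.sum_single_index rfl] at this
  rw [totalDegree, hdeg]
  omega

lemma degLE_nat {m : ℕ} {p : Poly2} (h : degLE (m : ℤ) p) : p.totalDegree ≤ m := by
  rcases h with rfl | h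
  · simp
  · exact_mod_cast h


/-- `[P_n(ℝ²)]² = ∇(P_{n+1}) ⊕ x^⊥ · P_{n-1}`: every vector polynomial of degree at
most `n` decomposes uniquely as a sum of a gradient of a polynomial of degree at most
`n+1` and `x^⊥` times a scalar polynomial of degree at most `n-1`. -/
theorem poly_decomposition_2d_grad_perp (n : ℕ) (v : Fin 2 → Poly2)
    (hv : ∀ i, degLE (n : ℤ) (v i)) :
    ∃! gc : (Fin 2 → Poly2) × (Fin 2 → Poly2),
      (∃ q : Poly2, degLE ((n : ℤ) + 1) q ∧ gc.1 = pgrad2 q) ∧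
      (∃ q : Poly2, degLE ((n : ℤ) - 1) q ∧ gc.2 = xperp q) ∧
      v = gc.1 + gc.2 := by
  have hvdeg : ∀ i, (v i).totalDegree ≤ n := fun i => degLE_nat (hv i)
  set p : Poly2 := X 0 * v 0 + X 1 * v 1 with hp
  have hpc : constantCoeff p = 0 := by simp [hp]
  set q : Poly2 := einvP p with hq
  have hqdeg : q.totalDegree ≤ n + 1 := by
    refine (totalDegree_einvP p).trans ?_
    refine (totalDegree_add _ _).trans (max_le ?_ ?_) <;>
      refine (totalDegree_mul _ _).trans ?_ <;> rw [totalDegree_X]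
    · have := hvdeg 0; omega
    · have := hvdeg 1; omega
  have heuler : X 0 * pderiv 0 q + X 1 * pderiv 1 q = p := by
    have := eulerOp_einvP hpc
    rwa [eulerOp] at this
  have hkey : X 0 * (v 0 - pderiv 0 q) + X 1 * (v 1 - pderiv 1 q) = 0 := by
    linear_combination hp - heuler
  obtain ⟨r, hr0, hr1⟩ := exists_xperp_of_sum_eq_zero hkey
  have hsum0 : v = pgrad2 q + xperp r := by
    funext i
    fin_cases i <;> simp [pgrad2, xperp, Pi.add_apply]
    · linear_combination hr0
    · linear_combination hr1
  refine ⟨(pgrad2 q, xperp r), ⟨⟨q, ?_, rfl⟩, ⟨r, ?_, rfl⟩, hsum0⟩, ?_⟩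
  · right
    exact_mod_cast hqdeg
  · by_cases hr : r = 0
    · exact Or.inl hr
    · right
      have h1 : (pderiv 0 q).totalDegree ≤ n := totalDegree_pderiv_le 0 q n hqdeg
      have hw : (v 0 - pderiv 0 q).totalDegree ≤ n :=
        (totalDegree_sub _ _).trans (max_le (hvdeg 0) h1)
      have h2 := le_totalDegree_X_mul hr 1
      rw [← hr0] at h2
      have : r.totalDegree + 1 ≤ n := h2.trans hw
      omega
  · rintro ⟨g, c⟩ ⟨⟨q1, hq1d, hg⟩, ⟨r1, hr1d, hc⟩, hsum1⟩
    simp only at hg hc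
    subst hg hc
    have he0 := congrFun (hsum1.symm.trans hsum0) 0
    have he1 := congrFun (hsum1.symm.trans hsum0) 1
    simp only [Pi.add_apply, pgrad2, xperp, Matrix.cons_val_zero, Matrix.cons_val_one,
      Matrix.head_cons] at he0 he1
    have hD0 : pderiv 0 (q1 - q) = X 1 * (r - r1) := by
      rw [map_sub]; linear_combination he0
    have hD1 : pderiv 1 (q1 - q) = -(X 0 * (r - r1)) := by
      rw [map_sub]; linear_combination he1
    have hker : eulerOp (q1 - q) = 0 := by
      rw [eulerOp, hD0, hD1]; ring
    have hpd : ∀ i : Fin 2, pderiv i (q1 - q) = 0 := eulerOp_ker hker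
    have hrr : r - r1 = 0 := by
      have := hD0.symm.trans (hpd 0)
      rcases mul_eq_zero.mp this with h' | h'
      · exact absurd h' (MvPolynomial.X_ne_zero 1)
      · exact h'
    have hr1r : r1 = r := by linear_combination -hrr
    have hqg : pgrad2 q1 = pgrad2 q := by
      funext i
      have := hpd i
      rw [map_sub, sub_eq_zero] at this
      exact this
    rw [Prod.mk.injEq]
    exact ⟨hqg, by rw [hr1r]⟩
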